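/- Let a > 0, γ ≥ 0, and ρ a finite positive Borel measure on [0,∞). Define A(z) = z(z+a)(γ + ∫₀^∞ (t²+1)/((t+a)(t−z)) dρ(t)) for z ∈ ℂ ∖ ℝ₊. Then Im(A(z)/(z+a)²) = Im z · (γa/|z+a|² + ∫₀^∞ ((t²+1)/(t+a)) · (ta+|z|²)/(|t−z|²|z+a|²) dρ(t)) ≥ 0 for Im z > 0; in particular A(z)/(z+a)² lies in the closed upper half-plane for z in the upper half-plane. -/

import Mathlib

open MeasureTheory Complex

lemma stmt17_pointwise (a : ℝ) (ha : 0 < a) (z : ℂ) (hz : 0 < z.im)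
    (t : ℝ) (ht : 0 ≤ t) :
    (z / (z + (a : ℂ)) * (((t : ℂ) ^ 2 + 1) / (((t : ℂ) + a) * ((t : ℂ) - z)))).im =
      z.im * (((t ^ 2 + 1) / (t + a)) *
        ((t * a + ‖z‖ ^ 2) /
          (‖(t : ℂ) - z‖ ^ 2 * ‖z + (a : ℂ)‖ ^ 2))) := by
  have hta : t + a ≠ 0 := by positivity
  have hza : (z + (a : ℂ)) ≠ 0 := by
    intro h
    have : (z + (a : ℂ)).im = 0 := by rw [h]; simp
    simp at this; linarith
  have htz : ((t : ℂ) - z) ≠ 0 := by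
    intro h
    have : ((t : ℂ) - z).im = 0 := by rw [h]; simp
    simp at this; linarith
  have hd1 : Complex.normSq (z + a) ≠ 0 := by simpa using hza
  have hd2 : Complex.normSq ((t : ℂ) - z) ≠ 0 := by simpa using htz
  have hkey : z / (z + (a : ℂ)) * (((t : ℂ) ^ 2 + 1) / (((t : ℂ) + a) * ((t : ℂ) - z))) =
      (z * ((t : ℂ) ^ 2 + 1) * ((starRingEnd ℂ) z + a) * ((t : ℂ) - (starRingEnd ℂ) z)) /
        ((Complex.normSq (z + a) * ((t + a) * Complex.normSq ((t : ℂ) - z)) : ℝ) : ℂ) := by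
    have htaC : ((t : ℂ) + a) ≠ 0 := by
      rw [show ((t : ℂ) + a) = ((t + a : ℝ) : ℂ) by push_cast; ring]
      exact_mod_cast hta
    rw [div_mul_div_comm, div_eq_div_iff (by exact mul_ne_zero hza (mul_ne_zero htaC htz)) (by
      push_cast
      exact_mod_cast mul_ne_zero hd1 (mul_ne_zero (by exact_mod_cast hta) hd2))]
    push_cast
    rw [← Complex.mul_conj (z + a), ← Complex.mul_conj ((t : ℂ) - z)]
    simp only [map_add, map_sub, Complex.conj_ofReal]
    ring
  rw [hkey, Complex.div_ofReal_im, Complex.sq_norm, Complex.sq_norm, Complex.sq_norm]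
  simp only [Complex.mul_im, Complex.mul_re, Complex.add_re, Complex.add_im, Complex.sub_re,
    Complex.sub_im, Complex.ofReal_re, Complex.ofReal_im, Complex.conj_re, Complex.conj_im,
    Complex.normSq_apply, Complex.one_re, Complex.one_im, ← Complex.ofReal_pow]
  have h1 : (z.re + a) ^ 2 + z.im ^ 2 ≠ 0 := by positivity
  have h2 : (t - z.re) ^ 2 + (0 - z.im) ^ 2 ≠ 0 := by
    have : (0:ℝ) - z.im = -z.im := by ring
    rw [this, neg_sq]; positivity
  field_simp
  ring

lemma stmt17_bound (a : ℝ) (ha : 0 < a) (z : ℂ) (hz : 0 < z.im) :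
    ∃ C : ℝ, ∀ t : ℝ, 0 ≤ t →
      ‖((t : ℂ) ^ 2 + 1) / (((t : ℂ) + a) * ((t : ℂ) - z))‖ ≤ C := by
  set x := z.re
  set y := z.im
  set M : ℝ := 1 + 2 * |x| + 1 / a with hM
  refine ⟨max 2 ((M + 1 / a) / y), fun t ht => ?_⟩
  have hta : (0:ℝ) < t + a := by positivity
  have habs1 : ‖(t : ℂ) ^ 2 + 1‖ = t ^ 2 + 1 := by
    rw [show ((t : ℂ) ^ 2 + 1) = ((t ^ 2 + 1 : ℝ) : ℂ) by push_cast; ring,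
      Complex.norm_real, Real.norm_eq_abs, _root_.abs_of_nonneg (by positivity)]
  have habs2 : ‖(t : ℂ) + a‖ = t + a := by
    rw [show ((t : ℂ) + a) = ((t + a : ℝ) : ℂ) by push_cast; ring,
      Complex.norm_real, Real.norm_eq_abs, _root_.abs_of_nonneg hta.le]
  have hlow1 : y ≤ ‖(t : ℂ) - z‖ := by
    have := Complex.abs_im_le_norm ((t : ℂ) - z)
    exact le_trans (le_of_eq (abs_of_pos hz).symm) (by simpa using this)
  have hlow2 : t - |x| ≤ ‖(t : ℂ) - z‖ := by
    have h1 := Complex.abs_re_le_norm ((t : ℂ) - z)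
    have h2 : t - |x| ≤ |t - x| := by
      rcases abs_cases x with ⟨h, _⟩ | ⟨h, _⟩ <;> rcases abs_cases (t - x) with ⟨h', _⟩ | ⟨h', _⟩ <;> linarith
    simpa using h2.trans h1
  have habspos : 0 < ‖(t : ℂ) - z‖ := lt_of_lt_of_le hz hlow1
  have hnum : t ^ 2 + 1 ≤ (t + a) * (t + 1 / a) := by
    have : (t + a) * (t + 1 / a) = t ^ 2 + 1 + t * (a + 1 / a) := by
      field_simp; ring
    nlinarith [mul_nonneg ht (by positivity : (0:ℝ) ≤ a + 1 / a)]
  have hF : ‖((t : ℂ) ^ 2 + 1) / (((t : ℂ) + a) * ((t : ℂ) - z))‖ ≤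
      (t + 1 / a) / ‖(t : ℂ) - z‖ := by
    rw [show ‖((t : ℂ) ^ 2 + 1) / (((t : ℂ) + a) * ((t : ℂ) - z))‖ =
      ‖(t : ℂ) ^ 2 + 1‖ / (‖(t : ℂ) + a‖ * ‖(t : ℂ) - z‖)
      by simp [map_div₀, map_mul]]
    rw [habs1, habs2, div_le_div_iff₀ (by positivity) habspos]
    calc (t ^ 2 + 1) * ‖(t : ℂ) - z‖
        ≤ ((t + a) * (t + 1 / a)) * ‖(t : ℂ) - z‖ := by
          exact mul_le_mul_of_nonneg_right hnum habspos.le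
      _ = (t + 1 / a) * ((t + a) * ‖(t : ℂ) - z‖) := by ring
  refine hF.trans ?_
  rcases le_or_gt t M with hcase | hcase
  · refine le_trans ?_ (le_max_right _ _)
    rw [div_le_div_iff₀ habspos hz]
    calc (t + 1 / a) * y ≤ (M + 1 / a) * y := mul_le_mul_of_nonneg_right (by linarith) hz.le
      _ ≤ (M + 1 / a) * ‖(t : ℂ) - z‖ := by
          have hM0 : 0 ≤ M + 1 / a := by positivity
          exact mul_le_mul_of_nonneg_left hlow1 hM0
  · refine le_trans ?_ (le_max_left _ _)
    have hhalf : (t + 1 / a) / 2 ≤ ‖(t : ℂ) - z‖ := by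
      refine le_trans ?_ hlow2
      have : 0 < a := ha
      rw [hM] at hcase
      rw [div_le_iff₀ (by norm_num : (0:ℝ) < 2)]
      nlinarith
    rw [div_le_iff₀ habspos]
    nlinarith [habspos]

theorem stmt17 (a γ : ℝ) (ha : 0 < a) (hγ : 0 ≤ γ)
    (ρ : Measure ℝ) [IsFiniteMeasure ρ] (hρ : ρ (Set.Iio 0) = 0)
    (A : ℂ → ℂ)
    (hA : ∀ z : ℂ, A z = z * (z + (a : ℂ)) * ((γ : ℂ) +
      ∫ t : ℝ, ((t : ℂ) ^ 2 + 1) / (((t : ℂ) + a) * ((t : ℂ) - z)) ∂ρ)) :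
    ∀ z : ℂ, 0 < z.im →
      (A z / (z + (a : ℂ)) ^ 2).im =
        z.im * (γ * a / ‖z + (a : ℂ)‖ ^ 2 +
          ∫ t : ℝ, ((t ^ 2 + 1) / (t + a)) *
            ((t * a + ‖z‖ ^ 2) /
              (‖(t : ℂ) - z‖ ^ 2 * ‖z + (a : ℂ)‖ ^ 2)) ∂ρ) ∧
      0 ≤ (A z / (z + (a : ℂ)) ^ 2).im := by
  intro z hz
  have hza : (z + (a : ℂ)) ≠ 0 := by
    intro h
    have : (z + (a : ℂ)).im = 0 := by rw [h]; simp
    simp at this; linarith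
  have hae : ∀ᵐ t ∂ρ, 0 ≤ t := by
    rw [ae_iff]
    convert hρ using 2
    ext t
    simp [not_le]
  set F : ℝ → ℂ := fun t => ((t : ℂ) ^ 2 + 1) / (((t : ℂ) + a) * ((t : ℂ) - z)) with hF
  obtain ⟨C, hC⟩ := stmt17_bound a ha z hz
  have hmeas : AEStronglyMeasurable F ρ :=
    (by fun_prop : Measurable F).aestronglyMeasurable
  have hint : Integrable F ρ :=
    Integrable.mono' (integrable_const C) hmeas (hae.mono fun t ht => hC t ht)
  have hintg : Integrable (fun t => z / (z + (a : ℂ)) * F t) ρ := hint.const_mul _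
  have heq : A z / (z + (a : ℂ)) ^ 2 =
      (γ : ℂ) * (z / (z + (a : ℂ))) + ∫ t, z / (z + (a : ℂ)) * F t ∂ρ := by
    rw [hA, integral_const_mul]
    field_simp
    ring
  have him : (∫ t, z / (z + (a : ℂ)) * F t ∂ρ).im
      = ∫ t, (z / (z + (a : ℂ)) * F t).im ∂ρ := (integral_im hintg).symm
  have hconst : ((γ : ℂ) * (z / (z + (a : ℂ)))).im
      = z.im * (γ * a / ‖z + (a : ℂ)‖ ^ 2) := by
    have hd1 : Complex.normSq (z + (a : ℂ)) ≠ 0 := by simpa using hza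
    rw [Complex.mul_im, Complex.ofReal_re, Complex.ofReal_im, Complex.div_im,
      Complex.sq_norm]
    simp only [Complex.add_re, Complex.add_im, Complex.ofReal_re, Complex.ofReal_im, add_zero]
    field_simp
    ring
  have hcongr : ∫ t, (z / (z + (a : ℂ)) * F t).im ∂ρ =
      z.im * ∫ t : ℝ, ((t ^ 2 + 1) / (t + a)) *
        ((t * a + ‖z‖ ^ 2) /
          (‖(t : ℂ) - z‖ ^ 2 * ‖z + (a : ℂ)‖ ^ 2)) ∂ρ := by
    rw [← integral_const_mul]
    refine integral_congr_ae (hae.mono fun t ht => ?_)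
    simp only [hF]
    exact stmt17_pointwise a ha z hz t ht
  have hmain : (A z / (z + (a : ℂ)) ^ 2).im =
      z.im * (γ * a / ‖z + (a : ℂ)‖ ^ 2 +
        ∫ t : ℝ, ((t ^ 2 + 1) / (t + a)) *
          ((t * a + ‖z‖ ^ 2) /
            (‖(t : ℂ) - z‖ ^ 2 * ‖z + (a : ℂ)‖ ^ 2)) ∂ρ) := by
    rw [heq, Complex.add_im, hconst, him, hcongr, mul_add]
  refine ⟨hmain, ?_⟩
  rw [hmain]
  have h1 : 0 ≤ γ * a / ‖z + (a : ℂ)‖ ^ 2 := by positivity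
  have h2 : 0 ≤ ∫ t : ℝ, ((t ^ 2 + 1) / (t + a)) *
      ((t * a + ‖z‖ ^ 2) /
        (‖(t : ℂ) - z‖ ^ 2 * ‖z + (a : ℂ)‖ ^ 2)) ∂ρ := by
    refine integral_nonneg_of_ae (hae.mono fun t ht => ?_)
    have : (0:ℝ) < t + a := by positivity
    positivity
  positivity
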